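/- There exist two count quadruples f = (f₁₁, f₀₁, f₁₀, f₀₀) and f' = (f'₁₁, f'₀₁, f'₁₀, f'₀₀) with all eight entries positive rationals such that both odds ratios exceed 1 and the first group is strictly less correlated than the second, i.e. 1 < (f₁₁·f₀₀)/(f₁₀·f₀₁) < (f'₁₁·f'₀₀)/(f'₁₀·f'₀₁), yet the first group has strictly larger absolute discrimination, |δ(f)| > |δ(f')|. Hence less correlation between the outcome and the protected attribute does not imply less discrimination. -/
import Mathlib

/-- Less correlation does not mean less discrimination: there
are two count quadruples with positive entries such that both odds ratios
exceed 1, the first group is strictly less correlated (odds ratio closer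
to 1), yet the first group has strictly larger absolute discrimination. -/
theorem less_correlation_not_less_discrimination :
    ∃ f11 f01 f10 f00 f'11 f'01 f'10 f'00 : ℚ,
      0 < f11 ∧ 0 < f01 ∧ 0 < f10 ∧ 0 < f00 ∧
      0 < f'11 ∧ 0 < f'01 ∧ 0 < f'10 ∧ 0 < f'00 ∧
      1 < f11 * f00 / (f10 * f01) ∧
      f11 * f00 / (f10 * f01) < f'11 * f'00 / (f'10 * f'01) ∧
      |f11 / (f11 + f01) - f10 / (f10 + f00)| >
        |f'11 / (f'11 + f'01) - f'10 / (f'10 + f'00)| := by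
  refine ⟨50, 50, 10, 90, 1, 99, 1, 9901, ?_⟩
  norm_num [abs_lt, abs_of_pos]
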